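/- Let e_1 < ... < e_n < 0 be real numbers and N ∈ ℕ with N > |e_1| / min{e_j - e_i : j > i}. Let m = (m_{ij})_{i≠j} be a multi-index of nonnegative integers with |m| ≥ 2N+3 and let j ∈ {1,...,n}. Then there exist multi-indices a = (a_{ij}), b = (b_{ij}) of nonnegative integers supported on pairs i < j, with Σ_{i<j} a_{ij} = N+1 = Σ_{i<j} b_{ij} and a_{ij} + b_{ij} ≤ m_{ij} + m_{ji} for all i < j, and indices k, l ∈ {1,...,n}, such that Σ_{i<j} a_{ij}(e_i - e_j) - e_k < 0, Σ_{i<j} b_{ij}(e_i - e_j) - e_l < 0, and for all z ∈ ℂ^n with |z| ≤ 1 one has |z_j Z^m| ≤ |z_j| · |z_k Z^a| · |z_l Z^b|, where Z^m = Π_{i≠j}(z_i z̄_j)^{m_{ij}}. -/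

import Mathlib

lemma aux_split {ι : Type*} [Fintype ι] [DecidableEq ι] (f : ι → ℕ) (K : ℕ)
    (h : K ≤ ∑ i, f i) : ∃ g : ι → ℕ, (∀ i, g i ≤ f i) ∧ ∑ i, g i = K := by
  induction K with
  | zero => exact ⟨fun _ => 0, fun i => Nat.zero_le _, by simp⟩
  | succ K ih =>
    obtain ⟨g, hg, hgs⟩ := ih (le_of_lt (Nat.lt_of_succ_le h))
    have hex : ∃ i, g i < f i := by
      by_contra hc
      push_neg at hc
      have h1 : ∑ i, f i ≤ ∑ i, g i := Finset.sum_le_sum fun i _ => hc i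
      omega
    obtain ⟨i₀, hi₀⟩ := hex
    refine ⟨fun i => g i + (if i = i₀ then 1 else 0), fun i => ?_, ?_⟩
    · by_cases hii : i = i₀
      · subst hii; simp; omega
      · simp [hii]; exact hg i
    · rw [Finset.sum_add_distrib, hgs, Finset.sum_ite_eq' Finset.univ i₀ (fun _ => 1)]
      simp

lemma aux_prodA {n : ℕ} (x : Fin n → ℝ) (f : Fin n → Fin n → ℕ) :
    ∏ i, ∏ j, (x i * x j) ^ (f i j) = ∏ i, x i ^ (∑ j, (f i j + f j i)) := by
  have h1 : ∏ i, ∏ j, (x i * x j) ^ (f i j)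
      = (∏ i, ∏ j, x i ^ f i j) * (∏ i, ∏ j, x j ^ f i j) := by
    rw [← Finset.prod_mul_distrib]
    refine Finset.prod_congr rfl fun i _ => ?_
    rw [← Finset.prod_mul_distrib]
    exact Finset.prod_congr rfl fun j _ => mul_pow _ _ _
  rw [h1, Finset.prod_comm (f := fun i j => x j ^ f i j)]
  rw [← Finset.prod_mul_distrib]
  refine Finset.prod_congr rfl fun i _ => ?_
  rw [Finset.prod_pow_eq_pow_sum, Finset.prod_pow_eq_pow_sum, ← pow_add,
    Finset.sum_add_distrib]

lemma aux_tot {n : ℕ} (m : Fin n → Fin n → ℕ) (hdiag : ∀ i, m i i = 0) :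
    ∑ p : Fin n × Fin n, (if p.1 < p.2 then m p.1 p.2 + m p.2 p.1 else 0)
      = ∑ i, ∑ j, m i j := by
  have hR : ∑ i, ∑ j, m i j = ∑ p : Fin n × Fin n, m p.1 p.2 := by
    rw [Fintype.sum_prod_type]
  rw [hR]
  have h1 : ∀ p : Fin n × Fin n,
      (if p.1 < p.2 then m p.1 p.2 + m p.2 p.1 else 0)
        = (if p.1 < p.2 then m p.1 p.2 else 0) + (if p.1 < p.2 then m p.2 p.1 else 0) := by
    intro p; split <;> simp
  rw [Finset.sum_congr rfl (fun p _ => h1 p), Finset.sum_add_distrib]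
  have h2 : ∑ p : Fin n × Fin n, (if p.1 < p.2 then m p.2 p.1 else 0)
      = ∑ p : Fin n × Fin n, (if p.2 < p.1 then m p.1 p.2 else 0) := by
    exact Fintype.sum_equiv (Equiv.prodComm (Fin n) (Fin n)) _ _ (fun p => by simp; rfl)
  rw [h2, ← Finset.sum_add_distrib]
  refine Finset.sum_congr rfl fun p _ => ?_
  rcases lt_trichotomy p.1 p.2 with h | h | h
  · simp [h, asymm h]
  · simp [h, hdiag]
  · simp [h, asymm h]

/-- Splitting of a large monomial `z_{j₀} Z^m` with `|m| ≥ 2N+3` into a product dominated by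
`|z_{j₀}| |z_k Z^a| |z_l Z^b|` with `a, b` supported on pairs `i < j`, of length `N+1`, and
satisfying the resonance inequalities. -/
theorem stmt3 (n : ℕ) (hn : 0 < n) (e : Fin n → ℝ) (N : ℕ)
    (hmono : ∀ i j : Fin n, i < j → e i < e j)
    (hneg : ∀ j, e j < 0)
    (hN : ∀ i j : Fin n, i < j → |e ⟨0, hn⟩| < (N : ℝ) * (e j - e i))
    (m : Fin n → Fin n → ℕ) (hdiag : ∀ i, m i i = 0)
    (hsum : 2 * N + 3 ≤ ∑ i, ∑ j, m i j) (j₀ : Fin n) :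
    ∃ a b : Fin n → Fin n → ℕ, ∃ k l : Fin n,
      (∀ i j : Fin n, ¬ i < j → a i j = 0) ∧
      (∀ i j : Fin n, ¬ i < j → b i j = 0) ∧
      (∑ i, ∑ j, a i j) = N + 1 ∧ (∑ i, ∑ j, b i j) = N + 1 ∧
      (∀ i j : Fin n, i < j → a i j + b i j ≤ m i j + m j i) ∧
      (∑ i, ∑ j, (a i j : ℝ) * (e i - e j)) - e k < 0 ∧
      (∑ i, ∑ j, (b i j : ℝ) * (e i - e j)) - e l < 0 ∧
      ∀ z : EuclideanSpace ℂ (Fin n), ‖z‖ ≤ 1 →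
        ‖z j₀ * ∏ i, ∏ j, (z i * (starRingEnd ℂ) (z j)) ^ (m i j)‖
          ≤ ‖z j₀‖
            * ‖z k * ∏ i, ∏ j, (z i * (starRingEnd ℂ) (z j)) ^ (a i j)‖
            * ‖z l * ∏ i, ∏ j, (z i * (starRingEnd ℂ) (z j)) ^ (b i j)‖ := by
  classical
  set M' : Fin n × Fin n → ℕ := fun p => if p.1 < p.2 then m p.1 p.2 + m p.2 p.1 else 0
    with hM'
  -- choose s ≤ M' with total 2N+3
  obtain ⟨s, hsle, hssum⟩ := aux_split M' (2 * N + 3)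
    (by rw [hM', aux_tot m hdiag]; exact hsum)
  -- pick a pair p₀ with s p₀ positive
  obtain ⟨p₀, -, hp₀⟩ : ∃ p₀ ∈ Finset.univ, s p₀ ≠ 0 :=
    Finset.exists_ne_zero_of_sum_ne_zero (by rw [hssum]; omega)
  have hpq : p₀.1 < p₀.2 := by
    by_contra h
    have : M' p₀ = 0 := by simp [hM', h]
    have := hsle p₀
    omega
  -- N is positive
  have hN0 : 0 < N := by
    rcases Nat.eq_zero_or_pos N with h | h
    · exfalso
      have h1 := hN p₀.1 p₀.2 hpq
      rw [h] at h1
      simp at h1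
      exact absurd h1 (not_lt.mpr (abs_nonneg _))
    · exact h
  -- subtract one unit at p₀
  set t : Fin n × Fin n → ℕ := fun p => if p = p₀ then s p - 1 else s p with ht
  have htle : ∀ p, t p ≤ s p := by
    intro p; by_cases h : p = p₀ <;> simp [ht, h]
  have htsum : ∑ p, t p = 2 * N + 2 := by
    have h1 : ∑ p, (t p + (if p = p₀ then 1 else 0)) = ∑ p, s p := by
      refine Finset.sum_congr rfl fun p _ => ?_
      by_cases h : p = p₀
      · subst h; simp [ht]; omega
      · simp [ht, h]
    rw [Finset.sum_add_distrib, Finset.sum_ite_eq' Finset.univ p₀ (fun _ => 1)] at h1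
    simp [hssum] at h1
    omega
  -- split t into a' and b'
  obtain ⟨a', ha'le, ha'sum⟩ := aux_split t (N + 1) (by omega)
  set b' : Fin n × Fin n → ℕ := fun p => t p - a' p with hb'
  have hab' : ∀ p, a' p + b' p = t p := by
    intro p; have := ha'le p; simp [hb']; omega
  have hb'sum : ∑ p, b' p = N + 1 := by
    have h1 : ∑ p, (a' p + b' p) = ∑ p, t p :=
      Finset.sum_congr rfl fun p _ => hab' p
    rw [Finset.sum_add_distrib, ha'sum, htsum] at h1
    omega
  -- the combined multiindex u with the extra unit at p₀
  set u : Fin n × Fin n → ℕ := fun p => a' p + b' p + (if p = p₀ then 1 else 0) with hu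
  have huM : ∀ p, u p ≤ M' p := by
    intro p
    have h1 := hab' p
    have h2 := hsle p
    by_cases h : p = p₀
    · subst h; simp [hu, ht] at *; omega
    · simp [hu, ht, h] at *; omega
  have haM : ∀ p, a' p ≤ M' p := by
    intro p
    have h1 := huM p
    have h2 := hab' p
    simp only [hu] at h1
    by_cases h : p = p₀
    · subst h; simp at h1; omega
    · simp [h] at h1; omega
  have hbM : ∀ p, b' p ≤ M' p := by
    intro p
    have h1 := huM p
    have h2 := hab' p
    simp only [hu] at h1
    by_cases h : p = p₀
    · subst h; simp at h1; omega
    · simp [h] at h1; omega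
  -- support facts
  have hasupp : ∀ i j : Fin n, ¬ i < j → a' (i, j) = 0 := by
    intro i j h
    have := haM (i, j)
    simp [hM', h] at this
    exact this
  have hbsupp : ∀ i j : Fin n, ¬ i < j → b' (i, j) = 0 := by
    intro i j h
    have := hbM (i, j)
    simp [hM', h] at this
    exact this
  -- generic resonance estimate
  have hres : ∀ c : Fin n → Fin n → ℕ, (∀ i j : Fin n, ¬ i < j → c i j = 0) →
      (∑ i, ∑ j, c i j) = N + 1 → ∀ k : Fin n,
      (∑ i, ∑ j, (c i j : ℝ) * (e i - e j)) - e k < 0 := by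
    intro c hc hcs k
    set c0 : ℝ := |e ⟨0, hn⟩| / N with hc0
    have hNR : (0 : ℝ) < N := by exact_mod_cast hN0
    have habs : 0 < |e ⟨0, hn⟩| := abs_pos.mpr (ne_of_lt (hneg _))
    have hc0pos : 0 < c0 := div_pos habs hNR
    have hterm : ∀ i j : Fin n, (c i j : ℝ) * (e i - e j) ≤ (c i j : ℝ) * (-c0) := by
      intro i j
      by_cases hij : i < j
      · refine mul_le_mul_of_nonneg_left ?_ (Nat.cast_nonneg _)
        have h2 : c0 < e j - e i := by
          rw [hc0, div_lt_iff₀ hNR]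
          have := hN i j hij
          linarith [mul_comm (N : ℝ) (e j - e i)]
        linarith
      · simp [hc i j hij]
    have hsum1 : (∑ i, ∑ j, (c i j : ℝ) * (e i - e j))
        ≤ (∑ i, ∑ j, (c i j : ℝ)) * (-c0) := by
      rw [Finset.sum_mul]
      refine Finset.sum_le_sum fun i _ => ?_
      rw [Finset.sum_mul]
      exact Finset.sum_le_sum fun j _ => hterm i j
    have hcast : (∑ i, ∑ j, (c i j : ℝ)) = ((N : ℝ) + 1) := by
      have h := congrArg (Nat.cast : ℕ → ℝ) hcs
      push_cast at h
      exact h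
    have h0k : e ⟨0, hn⟩ ≤ e k := by
      rcases Nat.eq_zero_or_pos k.val with h | h
      · have : k = ⟨0, hn⟩ := Fin.ext (by simp [h])
        rw [this]
      · exact le_of_lt (hmono ⟨0, hn⟩ k (by simpa [Fin.lt_def] using h))
    have hNc0 : (N : ℝ) * c0 = |e ⟨0, hn⟩| := by
      rw [hc0, mul_div_cancel₀ _ (ne_of_gt hNR)]
    have he0 : e ⟨0, hn⟩ = -|e ⟨0, hn⟩| := by
      rw [abs_of_neg (hneg _)]; ring
    rw [hcast] at hsum1
    nlinarith
  refine ⟨fun i j => a' (i, j), fun i j => b' (i, j), p₀.1, p₀.2,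
    hasupp, hbsupp, ?_, ?_, ?_, ?_, ?_, ?_⟩
  · rw [← Fintype.sum_prod_type]; exact ha'sum
  · rw [← Fintype.sum_prod_type]; exact hb'sum
  · intro i j hij
    show a' (i, j) + b' (i, j) ≤ m i j + m j i
    have h1 := hab' (i, j)
    have h2 := hsle (i, j)
    have h3 := htle (i, j)
    simp [hM', hij] at h2
    omega
  · exact hres _ hasupp (by rw [← Fintype.sum_prod_type]; exact ha'sum) _
  · exact hres _ hbsupp (by rw [← Fintype.sum_prod_type]; exact hb'sum) _
  -- the norm inequality
  intro z hz
  set x : Fin n → ℝ := fun i => ‖z i‖ with hx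
  have hx0 : ∀ i, 0 ≤ x i := fun i => norm_nonneg _
  have hx1 : ∀ i, x i ≤ 1 := by
    intro i
    have h1 : ‖z i‖ ≤ ‖z‖ := by
      rw [EuclideanSpace.norm_eq]
      calc ‖z i‖ = Real.sqrt (‖z i‖ ^ 2) := (Real.sqrt_sq (norm_nonneg _)).symm
        _ ≤ Real.sqrt (∑ j, ‖z j‖ ^ 2) :=
            Real.sqrt_le_sqrt (Finset.single_le_sum (f := fun j => ‖z j‖ ^ 2)
              (fun j _ => sq_nonneg _) (Finset.mem_univ i))
    exact le_trans h1 hz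
  have habs : ∀ f : Fin n → Fin n → ℕ,
      ‖∏ i, ∏ j, (z i * (starRingEnd ℂ) (z j)) ^ f i j‖
        = ∏ i, ∏ j, (x i * x j) ^ f i j := by
    intro f
    rw [norm_prod]
    refine Finset.prod_congr rfl fun i _ => ?_
    rw [norm_prod]
    refine Finset.prod_congr rfl fun j _ => ?_
    rw [norm_pow, norm_mul, Complex.norm_conj]
  rw [norm_mul, norm_mul, norm_mul, habs, habs, habs]
  -- key inequality on the x's
  have hkey : ∏ i, ∏ j, (x i * x j) ^ m i j
      ≤ (x p₀.1 * ∏ i, ∏ j, (x i * x j) ^ a' (i, j))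
        * (x p₀.2 * ∏ i, ∏ j, (x i * x j) ^ b' (i, j)) := by
    have hRHS : (x p₀.1 * ∏ i, ∏ j, (x i * x j) ^ a' (i, j))
        * (x p₀.2 * ∏ i, ∏ j, (x i * x j) ^ b' (i, j))
        = ∏ i, ∏ j, (x i * x j) ^ u (i, j) := by
      have h1 : ∀ i j : Fin n, (x i * x j) ^ u (i, j)
          = (x i * x j) ^ a' (i, j) * (x i * x j) ^ b' (i, j)
            * (x i * x j) ^ (if (i, j) = p₀ then 1 else 0) := by
        intro i j
        rw [hu, ← pow_add, ← pow_add]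
      calc (x p₀.1 * ∏ i, ∏ j, (x i * x j) ^ a' (i, j))
          * (x p₀.2 * ∏ i, ∏ j, (x i * x j) ^ b' (i, j))
          = (∏ i, ∏ j, (x i * x j) ^ a' (i, j)) * (∏ i, ∏ j, (x i * x j) ^ b' (i, j))
            * (x p₀.1 * x p₀.2) := by ring
        _ = (∏ i, ∏ j, (x i * x j) ^ a' (i, j)) * (∏ i, ∏ j, (x i * x j) ^ b' (i, j))
            * (∏ i, ∏ j, (x i * x j) ^ (if (i, j) = p₀ then 1 else 0)) := by
            congr 1
            have h2 : ∏ i, ∏ j, (x i * x j) ^ (if (i, j) = p₀ then 1 else 0)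
                = ∏ p : Fin n × Fin n, (x p.1 * x p.2) ^ (if p = p₀ then 1 else 0) := by
              rw [Fintype.prod_prod_type]
            rw [h2]
            have h3 : ∀ p : Fin n × Fin n, (x p.1 * x p.2) ^ (if p = p₀ then 1 else 0)
                = (if p = p₀ then x p.1 * x p.2 else 1) := by
              intro p; split <;> simp
            rw [Finset.prod_congr rfl (fun p _ => h3 p),
              Finset.prod_ite_eq' Finset.univ p₀ (fun p => x p.1 * x p.2)]
            simp
        _ = ∏ i, ∏ j, (x i * x j) ^ u (i, j) := by
            rw [← Finset.prod_mul_distrib, ← Finset.prod_mul_distrib]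
            refine (Finset.prod_congr rfl fun i _ => ?_).symm
            rw [← Finset.prod_mul_distrib, ← Finset.prod_mul_distrib]
            exact Finset.prod_congr rfl fun j _ => h1 i j
    rw [hRHS, aux_prodA x (fun i j => u (i, j)), aux_prodA x m]
    refine Finset.prod_le_prod (fun i _ => pow_nonneg (hx0 i) _) (fun i _ => ?_)
    refine pow_le_pow_of_le_one (hx0 i) (hx1 i) ?_
    refine Finset.sum_le_sum fun j _ => ?_
    have h4 := huM (i, j)
    have h5 := huM (j, i)
    rcases lt_trichotomy i j with h | h | h
    · simp [hM', h, asymm h] at h4 h5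
      omega
    · subst h
      simp [hM', lt_irrefl] at h4 h5
      omega
    · simp [hM', h, asymm h] at h4 h5
      omega
  calc x j₀ * ∏ i, ∏ j, (x i * x j) ^ m i j
      ≤ x j₀ * ((x p₀.1 * ∏ i, ∏ j, (x i * x j) ^ a' (i, j))
        * (x p₀.2 * ∏ i, ∏ j, (x i * x j) ^ b' (i, j))) :=
      mul_le_mul_of_nonneg_left hkey (hx0 j₀)
    _ = x j₀ * (x p₀.1 * ∏ i, ∏ j, (x i * x j) ^ a' (i, j))
        * (x p₀.2 * ∏ i, ∏ j, (x i * x j) ^ b' (i, j)) := by ring
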